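/- Let α ≥ 0, β > 0, and let f : ℝ → ℝ be twice continuously differentiable on (-∞, 1] satisfying f(y) + α² y f'(y) - (1/β²) f''(y) = 0 for y < 1, with f(1) = 1, f'(1) = 1, and f(y) → 0 as y → -∞. Then f(y) > 0 for all y ≤ 0. -/
import Mathlib


open Filter Topology

lemma bnd_aux (B A C a b x : ℝ) (hB : 0 < B) (hA : 0 ≤ A) (hC : |x| ≤ C) :
    |2 * a ^ 1 * b + 2 * b ^ 1 * (B * (a + A * x * b))| ≤ (1 + B + 2 * B * A * C) * (a ^ 2 + b ^ 2) := by
  obtain ⟨h1, h2⟩ := abs_le.mp hC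
  have hC0 : 0 ≤ C := le_trans (abs_nonneg x) hC
  have k1 : 0 ≤ (C - x) * (B * (A * b ^ 2)) :=
    mul_nonneg (by linarith) (mul_nonneg hB.le (mul_nonneg hA (sq_nonneg b)))
  have k2 : 0 ≤ (x + C) * (B * (A * b ^ 2)) :=
    mul_nonneg (by linarith) (mul_nonneg hB.le (mul_nonneg hA (sq_nonneg b)))
  have hup : 2 * a * b ≤ a ^ 2 + b ^ 2 := by nlinarith [sq_nonneg (a - b)]
  have hdn : -(a ^ 2 + b ^ 2) ≤ 2 * a * b := by nlinarith [sq_nonneg (a + b)]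
  have hbup : 2 * B * a * b ≤ B * (a ^ 2 + b ^ 2) := by
    nlinarith [mul_nonneg hB.le (sq_nonneg (a - b))]
  have hbdn : -(B * (a ^ 2 + b ^ 2)) ≤ 2 * B * a * b := by
    nlinarith [mul_nonneg hB.le (sq_nonneg (a + b))]
  have hCa : 0 ≤ 2 * B * A * C * a ^ 2 := by positivity
  rw [abs_le]
  constructor <;> nlinarith [k1, k2, hCa]

theorem stmt2 (α β : ℝ) (hα : 0 ≤ α) (hβ : 0 < β) (f : ℝ → ℝ)
    (hf : ContDiffOn ℝ 2 f (Set.Iic 1))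
    (hode : ∀ y < (1:ℝ),
      f y + α ^ 2 * y * deriv f y - (1 / β ^ 2) * deriv (deriv f) y = 0)
    (hf1 : f 1 = 1) (hf'1 : deriv f 1 = 1)
    (hlim : Tendsto f atBot (𝓝 0)) :
    ∀ y ≤ (0:ℝ), 0 < f y := by
  open Set in
  have hfo : ContDiffOn ℝ 2 f (Set.Iio 1) := hf.mono Set.Iio_subset_Iic_self
  have hd1 : ∀ y < (1:ℝ), HasDerivAt f (deriv f y) y := fun y hy =>
    ((hfo.differentiableOn (by norm_num)).differentiableAt (Iio_mem_nhds hy)).hasDerivAt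
  have hcd1 : ContDiffOn ℝ 1 (deriv f) (Set.Iio 1) :=
    hfo.deriv_of_isOpen isOpen_Iio (by norm_num)
  have hd2 : ∀ y < (1:ℝ), HasDerivAt (deriv f) (deriv (deriv f) y) y := fun y hy =>
    ((hcd1.differentiableOn (by norm_num)).differentiableAt (Iio_mem_nhds hy)).hasDerivAt
  have hcont : ContinuousOn f (Set.Iic 1) := hf.continuousOn
  have hβ2 : (0:ℝ) < β ^ 2 := by positivity
  have hode' : ∀ y < (1:ℝ), deriv (deriv f) y = β ^ 2 * (f y + α ^ 2 * y * deriv f y) := by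
    intro y hy
    have h := hode y hy
    have h1 : (1 / β ^ 2) * deriv (deriv f) y = f y + α ^ 2 * y * deriv f y := by linarith
    have h2 : deriv (deriv f) y = β ^ 2 * ((1 / β ^ 2) * deriv (deriv f) y) := by
      field_simp
    rw [h2, h1]
  -- A negative interior minimum is impossible
  have key : ∀ yh < (1:ℝ), (∀ y ≤ (1:ℝ), f yh ≤ f y) → f yh < 0 → False := by
    intro yh hyh hmin hneg
    have hlocmin : IsLocalMin f yh := by
      filter_upwards [Iic_mem_nhds hyh] with y hy using hmin y hy
    have hderiv0 : deriv f yh = 0 := hlocmin.deriv_eq_zero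
    have hf''neg : deriv (deriv f) yh < 0 := by
      rw [hode' yh hyh, hderiv0]
      have h0 : f yh + α ^ 2 * yh * 0 = f yh := by ring
      rw [h0]
      exact mul_neg_of_pos_of_neg hβ2 hneg
    have hslope : Tendsto (slope (deriv f) yh) (𝓝[≠] yh) (𝓝 (deriv (deriv f) yh)) :=
      hasDerivAt_iff_tendsto_slope.1 (hd2 yh hyh)
    have hev : ∀ᶠ y in 𝓝[<] yh, slope (deriv f) yh y < 0 := by
      have h1 : ∀ᶠ y in 𝓝[≠] yh, slope (deriv f) yh y < 0 :=
        hslope.eventually (eventually_lt_nhds hf''neg)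
      exact h1.filter_mono (nhdsWithin_mono yh (fun y hy => ne_of_lt hy))
    have hev' : ∀ᶠ y in 𝓝[<] yh, 0 < deriv f y := by
      filter_upwards [hev, self_mem_nhdsWithin] with y hs (hy : y < yh)
      rw [slope_def_field, hderiv0, sub_zero] at hs
      rcases div_neg_iff.mp hs with ⟨h1, h2⟩ | ⟨h1, h2⟩ <;> linarith
    obtain ⟨l, hl, hsub⟩ := mem_nhdsLT_iff_exists_Ioo_subset.mp hev'
    set a := (l + yh)/2 with ha
    have hal : l < a := by simp only [mem_Iio] at hl; simp [ha]; linarith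
    have hayh : a < yh := by simp only [mem_Iio] at hl; simp [ha]; linarith
    obtain ⟨c, hc, hceq⟩ := exists_hasDerivAt_eq_slope f (deriv f) hayh
      (hcont.mono (fun x hx => le_of_lt (lt_of_le_of_lt hx.2 hyh)))
      (fun x hx => hd1 x (lt_trans hx.2 hyh))
    have hcpos : 0 < deriv f c := hsub ⟨lt_trans hal hc.1, hc.2⟩
    have : deriv f c ≤ 0 := by
      rw [hceq]
      apply div_nonpos_of_nonpos_of_nonneg
      · have := hmin a (le_of_lt (lt_trans hayh hyh))
        linarith
      · linarith
    linarith
  -- Nonnegativity on (-∞, 1]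
  have hnonneg : ∀ y ≤ (1:ℝ), 0 ≤ f y := by
    by_contra h
    push_neg at h
    obtain ⟨y₀, hy₀1, hy₀⟩ := h
    have hev : ∀ᶠ y in atBot, f y₀ / 2 < f y :=
      hlim.eventually (eventually_gt_nhds (by linarith))
    obtain ⟨A, hA⟩ := eventually_atBot.mp hev
    set A' := min A y₀ with hA'
    have hA'1 : A' ≤ 1 := le_trans (min_le_right _ _) hy₀1
    obtain ⟨yh, hyhmem, hyhmin⟩ := isCompact_Icc.exists_isMinOn (nonempty_Icc.mpr hA'1)
      (hcont.mono (fun x hx => hx.2))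
    have hy₀mem : y₀ ∈ Icc A' 1 := ⟨min_le_right _ _, hy₀1⟩
    have hm : f yh ≤ f y₀ := hyhmin hy₀mem
    have hyh1 : yh < 1 := by
      rcases lt_or_eq_of_le hyhmem.2 with h | h
      · exact h
      · exfalso; rw [h, hf1] at hm; linarith
    have hgmin : ∀ y ≤ (1:ℝ), f yh ≤ f y := by
      intro y hy
      rcases le_or_gt A' y with h | h
      · exact hyhmin ⟨h, hy⟩
      · have := hA y (le_of_lt (lt_of_lt_of_le h (min_le_left _ _)))
        linarith
    exact key yh hyh1 hgmin (by linarith)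
  -- Strict positivity on (-∞, 0]
  intro yh hyh0
  rcases (hnonneg yh (hyh0.trans zero_le_one)).lt_or_eq with h | h
  · exact h
  exfalso
  have hfyh : f yh = 0 := h.symm
  have hyh1 : yh < 1 := lt_of_le_of_lt hyh0 one_pos
  have hlocmin : IsLocalMin f yh := by
    filter_upwards [Iic_mem_nhds hyh1] with y hy
    rw [hfyh]; exact hnonneg y hy
  have hderiv0 : deriv f yh = 0 := hlocmin.deriv_eq_zero
  -- Grönwall setup
  set C : ℝ := max (-yh) 1 with hC
  have hC1 : (1:ℝ) ≤ C := le_max_right _ _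
  have hCyh : -yh ≤ C := le_max_left _ _
  set K : ℝ := 1 + β ^ 2 + 2 * β ^ 2 * α ^ 2 * C with hK
  set u : ℝ → ℝ := fun y => f y ^ 2 + deriv f y ^ 2 with hu
  have keyz : ∀ x ∈ Ico yh (1:ℝ), f x = 0 := by
    intro r hr
    have hr1 : r < 1 := hr.2
    have hsub1 : Icc yh r ⊆ Iio 1 := fun z hz => lt_of_le_of_lt hz.2 hr1
    have hucont : ContinuousOn u (Icc yh r) := by
      apply ContinuousOn.add
      · exact ((hcont.mono (fun z hz => Set.mem_Iic.mpr (Set.mem_Iio.mp (hsub1 hz)).le)).pow 2)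
      · exact ((hcd1.continuousOn.mono hsub1).pow 2)
    have hud : ∀ x ∈ Ico yh r, HasDerivWithinAt u
        (2 * f x ^ 1 * deriv f x + 2 * deriv f x ^ 1 * deriv (deriv f) x) (Ici x) x := by
      intro x hx
      have hx1 : x < 1 := lt_of_lt_of_le hx.2 (le_of_lt hr1)
      exact (((hd1 x hx1).pow 2).add ((hd2 x hx1).pow 2)).hasDerivWithinAt
    have hbound : ∀ x ∈ Ico yh r, ‖2 * f x ^ 1 * deriv f x + 2 * deriv f x ^ 1 * deriv (deriv f) x‖
        ≤ K * ‖u x‖ + 0 := by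
      intro x hx
      have hx1 : x < 1 := lt_of_lt_of_le hx.2 (le_of_lt hr1)
      have hxC : |x| ≤ C := by
        rcases le_or_gt 0 x with h' | h'
        · rw [abs_of_nonneg h']; have := hx.2; have := hr1; have := hC1; linarith
        · rw [abs_of_neg h']; have := hx.1; have := hCyh; linarith
      have hunn : (0:ℝ) ≤ u x := by positivity
      rw [hode' x hx1, Real.norm_eq_abs, Real.norm_eq_abs, abs_of_nonneg hunn, add_zero]
      exact bnd_aux (β ^ 2) (α ^ 2) C (f x) (deriv f x) x hβ2 (sq_nonneg α) hxC
    have hinit : ‖u yh‖ ≤ 0 := by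
      simp only [hu, hfyh, hderiv0]
      norm_num
    have := norm_le_gronwallBound_of_norm_deriv_right_le hucont hud hinit hbound r
      ⟨hr.1, le_refl r⟩
    rw [gronwallBound_ε0_δ0] at this
    have hur : u r = 0 := by
      have h1 : (0:ℝ) ≤ u r := by positivity
      have h2 := (Real.norm_eq_abs _ ▸ this)
      rw [abs_of_nonneg h1] at h2
      linarith
    have hur' : f r ^ 2 + deriv f r ^ 2 = 0 := hur
    have hsq : f r ^ 2 = 0 := by nlinarith [sq_nonneg (f r), sq_nonneg (deriv f r)]
    exact (pow_eq_zero_iff two_ne_zero).mp hsq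
  -- contradiction with f 1 = 1
  have hIco : Ico yh (1:ℝ) ∈ 𝓝[<] (1:ℝ) := Ico_mem_nhdsLT_of_mem ⟨hyh1, le_refl 1⟩
  have heq : f =ᶠ[𝓝[<] (1:ℝ)] fun _ => 0 := by
    filter_upwards [hIco] with x hx using keyz x hx
  have ht1 : Tendsto f (𝓝[<] (1:ℝ)) (𝓝 1) := by
    have h' := (hcont 1 (Set.mem_Iic.mpr le_rfl)).mono (Iio_subset_Iic_self)
    unfold ContinuousWithinAt at h'
    rw [hf1] at h'
    exact h'
  have ht2 : Tendsto f (𝓝[<] (1:ℝ)) (𝓝 0) := by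
    rw [tendsto_congr' heq]
    exact tendsto_const_nhds
  exact zero_ne_one (tendsto_nhds_unique ht2 ht1)
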